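/- arXiv:2104.07137 — 3 statements merged into one kernel-verified Lean document; each statement's English description precedes it below -/
import Mathlib

section
/- For all u ≥ 1 one has (u + 2)/4 ≤ ξ(u) ≤ u + 1. -/
open Real MeasureTheory

theorem xi_elementary_bounds (ξ : ℝ → ℝ)
    (hξ0 : ∀ u : ℝ, u < 1 → ξ u = 0)
    (hξ : ∀ u : ℝ, 1 ≤ u → u * ξ u = 2 + 2 * ∫ t in (1:ℝ)..(u - 1), ξ t) :
    ∀ u : ℝ, 1 ≤ u → (u + 2) / 4 ≤ ξ u ∧ ξ u ≤ u + 1 := by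
  -- ξ vanishes a.e. on any interval to the left of 1
  have hA : ∀ v : ℝ, v ≤ 1 → IntervalIntegrable ξ volume 1 v ∧ (∫ t in (1:ℝ)..v, ξ t) = 0 := by
    intro v hv
    have hae : ξ =ᵐ[volume.restrict (Set.Ioc v 1)] (fun _ => (0:ℝ)) := by
      rw [Filter.EventuallyEq, ae_restrict_iff' measurableSet_Ioc]
      have h1 : ∀ᵐ t : ℝ ∂volume, t ≠ 1 := by
        refine ae_iff.2 ?_
        simpa using Real.volume_singleton
      filter_upwards [h1] with t ht htmem
      exact hξ0 t (lt_of_le_of_ne htmem.2 ht)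
    have hint : IntegrableOn ξ (Set.Ioc v 1) volume :=
      (integrable_congr hae).2 (integrable_zero _ _ _)
    constructor
    · rw [intervalIntegrable_iff, Set.uIoc_comm, Set.uIoc_of_le hv]
      exact hint
    · rw [intervalIntegral.integral_symm, intervalIntegral.integral_of_le hv,
        setIntegral_congr_ae measurableSet_Ioc ((ae_restrict_iff' measurableSet_Ioc).1 hae)]
      simp
  have hc1 : ∀ a b : ℝ, IntervalIntegrable (fun t : ℝ => (t+2)/4) volume a b :=
    fun a b => (by continuity : Continuous fun t : ℝ => (t+2)/4).intervalIntegrable a b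
  have hc2 : ∀ a b : ℝ, IntervalIntegrable (fun t : ℝ => t+1) volume a b :=
    fun a b => (by continuity : Continuous fun t : ℝ => t+1).intervalIntegrable a b
  -- antiderivative computations
  have hint1 : ∀ v : ℝ, (∫ t in (1:ℝ)..v, (t+2)/4) = (v^2/8 + v/2) - (1/8 + 1/2) := by
    intro v
    rw [intervalIntegral.integral_eq_sub_of_hasDerivAt
      (f := fun t => t^2/8 + t/2) (fun t _ => by
        have : HasDerivAt (fun t : ℝ => t^2/8 + t/2) (2*t/8 + 1/2) t := by
          simpa using ((hasDerivAt_pow 2 t).div_const 8).fun_add ((hasDerivAt_id t).div_const 2)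
        exact this.congr_deriv (by ring))
      (hc1 1 v)]
    norm_num
  have hint2 : ∀ v : ℝ, (∫ t in (1:ℝ)..v, (t+1)) = (v^2/2 + v) - (1/2 + 1) := by
    intro v
    rw [intervalIntegral.integral_eq_sub_of_hasDerivAt
      (f := fun t => t^2/2 + t) (fun t _ => by
        have : HasDerivAt (fun t : ℝ => t^2/2 + t) (2*t/2 + 1) t := by
          simpa using ((hasDerivAt_pow 2 t).div_const 2).fun_add (hasDerivAt_id t)
        exact this.congr_deriv (by ring))
      (hc2 1 v)]
    norm_num
  -- main induction
  have key : ∀ n : ℕ, IntervalIntegrable ξ volume 1 ((n:ℝ)+1) ∧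
      ∀ u : ℝ, 1 ≤ u → u ≤ (n:ℝ)+1 → (u + 2) / 4 ≤ ξ u ∧ ξ u ≤ u + 1 := by
    intro n
    induction n with
    | zero =>
      constructor
      · simpa using IntervalIntegrable.refl (f := ξ) (μ := volume) (a := (1:ℝ))
      · intro u hu hu'
        have hu1 : u = 1 := le_antisymm (by simpa using hu') hu
        subst hu1
        have h := hξ 1 le_rfl
        rw [show (1:ℝ) - 1 = 0 by norm_num, (hA 0 (by norm_num)).2] at h
        have : ξ 1 = 2 := by linarith
        rw [this]; norm_num
    | succ n ih =>
      obtain ⟨ihint, ihb⟩ := ih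
      -- bounds for u in (n+1, n+2]
      have hb : ∀ u : ℝ, 1 ≤ u → u ≤ (n:ℝ)+1+1 → (u + 2) / 4 ≤ ξ u ∧ ξ u ≤ u + 1 := by
        intro u hu hu'
        rcases le_or_gt u ((n:ℝ)+1) with h | h
        · exact ihb u hu h
        rcases le_or_gt u 2 with h2 | h2
        · -- integral vanishes, ξ u = 2 / u
          have heq := hξ u hu
          rw [(hA (u-1) (by linarith)).2] at heq
          have hup : (0:ℝ) < u := by linarith
          have hv : ξ u = 2 / u := by field_simp at heq ⊢; linarith
          rw [hv]
          constructor
          · rw [div_le_div_iff₀ (by norm_num) hup]; nlinarith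
          · rw [div_le_iff₀ hup]; nlinarith
        · -- 2 < u : use induction bounds on [1, u-1]
          have hv1 : (1:ℝ) ≤ u - 1 := by linarith
          have hvn : u - 1 ≤ (n:ℝ)+1 := by linarith
          have hss : Set.uIcc (1:ℝ) (u-1) ⊆ Set.uIcc (1:ℝ) ((n:ℝ)+1) := by
            rw [Set.uIcc_of_le hv1, Set.uIcc_of_le (by linarith : (1:ℝ) ≤ (n:ℝ)+1)]
            exact Set.Icc_subset_Icc le_rfl hvn
          have hξi : IntervalIntegrable ξ volume 1 (u-1) := ihint.mono_set hss
          have hlow : ((u-1)^2/8 + (u-1)/2) - (1/8 + 1/2) ≤ ∫ t in (1:ℝ)..(u-1), ξ t := by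
            rw [← hint1 (u-1)]
            refine intervalIntegral.integral_mono_on hv1
              (hc1 1 (u-1)) hξi ?_
            intro t ht
            exact (ihb t ht.1 (le_trans ht.2 hvn)).1
          have hhigh : (∫ t in (1:ℝ)..(u-1), ξ t) ≤ ((u-1)^2/2 + (u-1)) - (1/2 + 1) := by
            rw [← hint2 (u-1)]
            refine intervalIntegral.integral_mono_on hv1 hξi (hc2 1 (u-1)) ?_
            intro t ht
            exact (ihb t ht.1 (le_trans ht.2 hvn)).2
          have heq := hξ u hu
          have hup : (0:ℝ) < u := by linarith
          constructor
          · nlinarith [heq, hlow, hup, sq_nonneg u]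
          · nlinarith [heq, hhigh, hup]
      refine ⟨?_, by exact_mod_cast hb⟩
      -- integrability on [1, n+2]
      set J : ℝ → ℝ := fun v => ∫ t in (1:ℝ)..v, ξ t with hJ
      have hn1 : (1:ℝ) ≤ (n:ℝ)+1 := by linarith [Nat.cast_nonneg (α := ℝ) n]
      have hKcont : ContinuousOn J (Set.Icc 1 ((n:ℝ)+1)) := by
        have := intervalIntegral.continuousOn_primitive_interval' ihint
          (a := 1) (by rw [Set.uIcc_of_le hn1]; exact Set.left_mem_Icc.2 hn1)
        rwa [Set.uIcc_of_le hn1] at this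
      have hJcont : ContinuousOn J (Set.Icc 0 ((n:ℝ)+1)) := by
        have hmax : ContinuousOn (fun v => J (max v 1)) (Set.Icc 0 ((n:ℝ)+1)) := by
          refine hKcont.comp ((continuous_id.max continuous_const).continuousOn) ?_
          intro v hv
          exact ⟨le_max_right _ _, max_le hv.2 (by push_cast; linarith)⟩
        refine hmax.congr ?_
        intro v hv
        rcases le_or_gt 1 v with h | h
        · show J v = J (max v 1)
          rw [max_eq_left h]
        · show J v = J (max v 1)
          have h1 : J v = 0 := (hA v h.le).2
          have h2 : J (max v 1) = 0 := by
            rw [max_eq_right h.le]; exact (hA 1 le_rfl).2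
          rw [h1, h2]
      have hgcont : ContinuousOn (fun u => (2 + 2 * J (u-1)) / u) (Set.Icc 1 ((n:ℝ)+1+1)) := by
        apply ContinuousOn.div
        · apply ContinuousOn.add continuousOn_const
          apply ContinuousOn.mul continuousOn_const
          apply hJcont.comp (Continuous.continuousOn (f := fun u : ℝ => u - 1) (by continuity))
          intro u hu
          simp only [Set.mem_Icc] at hu ⊢
          constructor <;> linarith [hu.1, hu.2]
        · exact continuousOn_id
        · intro u hu
          exact ne_of_gt (lt_of_lt_of_le zero_lt_one hu.1)
      have hgint : IntervalIntegrable (fun u => (2 + 2 * J (u-1)) / u) volume 1 ((n:ℝ)+1+1) := by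
        apply ContinuousOn.intervalIntegrable
        rwa [Set.uIcc_of_le (by push_cast; linarith [Nat.cast_nonneg (α := ℝ) n])]
      rw [intervalIntegrable_iff] at hgint ⊢
      push_cast at hgint ⊢
      refine hgint.congr_fun ?_ measurableSet_uIoc
      intro u hu
      rw [Set.uIoc_of_le (by linarith [Nat.cast_nonneg (α := ℝ) n])] at hu
      have hu1 : (1:ℝ) ≤ u := hu.1.le
      have heq := hξ u hu1
      have hup : (0:ℝ) < u := by linarith
      field_simp
      linarith [heq]
  intro u hu
  obtain ⟨n, hn⟩ := exists_nat_ge u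
  exact (key n).2 u hu (by linarith)
end

section
/- For all u ≥ 0 one has ξ(u) = 2ω(u) + ∫₀^u ω(t) ω(u−t) dt. -/
open Real MeasureTheory

namespace XB
open Set

lemma ae_ne (c : ℝ) : ∀ᵐ x : ℝ, x ≠ c := by
  have : (volume : Measure ℝ) {c} = 0 := measure_singleton c
  filter_upwards [measure_eq_zero_iff_ae_notMem.mp this] with x hx
  simpa using hx

variable {f : ℝ → ℝ} {a b : ℝ}

lemma integral_small (h0 : ∀ u : ℝ, u < 1 → f u = 0) {c d : ℝ} (hc : c ≤ 1) (hd : d ≤ 1) :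
    ∫ t in c..d, f t = 0 := by
  rw [intervalIntegral.integral_congr_ae (g := fun _ => (0:ℝ))]
  · simp
  · filter_upwards [ae_ne 1] with x hx hmem
    have hle : x ≤ max c d := hmem.2
    exact h0 x (lt_of_le_of_ne (hle.trans (max_le hc hd)) hx)

lemma integrableOn_zero_part (h0 : ∀ u : ℝ, u < 1 → f u = 0) {s : Set ℝ}
    (hs : MeasurableSet s) (hsub : ∀ x ∈ s, x ≤ 1) : IntegrableOn f s := by
  have : f =ᵐ[volume.restrict s] (fun _ => (0:ℝ)) := by
    have h1 : ∀ᵐ x ∂(volume.restrict s), x ≠ 1 := ae_restrict_of_ae (ae_ne 1)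
    have h2 : ∀ᵐ x ∂(volume.restrict s), x ∈ s := ae_restrict_mem hs
    filter_upwards [h1, h2] with x hx hxs
    exact h0 x (lt_of_le_of_ne (hsub x hxs) hx)
  exact (integrable_zero _ _ _).congr this.symm

lemma bootstrap (h0 : ∀ u : ℝ, u < 1 → f u = 0)
    (hf : ∀ u : ℝ, 1 ≤ u → u * f u = a + b * ∫ t in (1:ℝ)..(u - 1), f t) :
    ∀ c d : ℝ, IntervalIntegrable f volume c d := by
  have key : ∀ n : ℕ, IntegrableOn f (Icc (0:ℝ) (n+1)) := by
    intro n
    induction n with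
    | zero =>
      exact integrableOn_zero_part h0 measurableSet_Icc (by intro x hx; simpa using hx.2)
    | succ n ih =>
      have hn0 : (0:ℝ) ≤ (n:ℝ) + 1 := by positivity
      have hII : IntervalIntegrable f volume 0 (n+1) := by
        rw [intervalIntegrable_iff_integrableOn_Icc_of_le hn0]
        exact ih
      set g : ℝ → ℝ := fun x => ∫ t in (0:ℝ)..x, f t with hg
      have hicc : IntegrableOn f (uIcc (0:ℝ) ((n:ℝ)+1)) := by
        rw [uIcc_of_le hn0]; exact ih
      have hgc : ContinuousOn g (Icc (0:ℝ) ((n:ℝ)+1)) := by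
        have h2 := intervalIntegral.continuousOn_primitive_interval (μ := volume) hicc
        rwa [uIcc_of_le hn0] at h2
      have hfeq : ∀ u ∈ Icc (1:ℝ) ((n:ℝ)+2), f u = (a + b * (g (u-1) - g 1)) / u := by
        intro u hu
        have h1u : (1:ℝ) ≤ u := hu.1
        have hu0 : u ≠ 0 := by intro h; rw [h] at h1u; norm_num at h1u
        have i1 : IntervalIntegrable f volume 0 (u-1) := hII.mono_set (by
          rw [uIcc_of_le (by linarith : (0:ℝ) ≤ u-1), uIcc_of_le hn0]
          exact Icc_subset_Icc le_rfl (by linarith [hu.2]))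
        have i2 : IntervalIntegrable f volume 0 1 := hII.mono_set (by
          rw [uIcc_of_le (by norm_num : (0:ℝ) ≤ 1), uIcc_of_le hn0]
          exact Icc_subset_Icc le_rfl (by linarith))
        have hsplit : ∫ t in (1:ℝ)..(u-1), f t = g (u-1) - g 1 := by
          simp only [hg]
          exact (intervalIntegral.integral_interval_sub_left i1 i2).symm
        have h3 := hf u h1u
        rw [hsplit] at h3
        field_simp
        linarith [h3]
      have hgc' : ContinuousOn (fun u : ℝ => g (u-1)) (Icc 1 ((n:ℝ)+2)) := by
        apply hgc.comp (Continuous.continuousOn (by continuity))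
        intro x hx
        simp only [mem_Icc] at hx ⊢
        constructor
        · linarith [hx.1]
        · linarith [hx.2]
      have hcont : ContinuousOn f (Icc (1:ℝ) ((n:ℝ)+2)) := by
        apply ContinuousOn.congr (f := fun u => (a + b * (g (u-1) - g 1)) / u) ?_ (fun u hu => hfeq u hu)
        exact (continuousOn_const.add (continuousOn_const.mul (hgc'.sub continuousOn_const))).div
          continuousOn_id (fun x hx => (by linarith [hx.1] : (0:ℝ) < x).ne')
      have hun : IntegrableOn f (Icc (0:ℝ) 1 ∪ Icc 1 ((n:ℝ)+2)) :=
        (integrableOn_zero_part h0 measurableSet_Icc (fun x hx => hx.2)).union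
          (hcont.integrableOn_Icc)
      rw [Icc_union_Icc_eq_Icc (by norm_num) (by linarith : (1:ℝ) ≤ (n:ℝ)+2)] at hun
      have e : (((n+1:ℕ):ℝ) + 1) = (n:ℝ) + 2 := by push_cast; ring
      rw [e]; exact hun
  intro c d
  have h1 : IntegrableOn f (Iio (1:ℝ)) := by
    have heq : EqOn (fun _ : ℝ => (0:ℝ)) f (Iio 1) := fun x hx => (h0 x hx).symm
    exact IntegrableOn.congr_fun integrableOn_zero heq measurableSet_Iio
  obtain ⟨n, hn⟩ := exists_nat_ge (max c d)
  apply intervalIntegrable_iff.mpr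
  apply ((h1.union (key n)).mono_set)
  intro x hx
  have hx2 : x ≤ max c d := hx.2
  by_cases hx1 : x < 1
  · exact Or.inl hx1
  · exact Or.inr ⟨by linarith, by linarith⟩

variable {f : ℝ → ℝ} {a b : ℝ}

lemma f_eq_indicator (h0 : ∀ u : ℝ, u < 1 → f u = 0)
    (hf : ∀ u : ℝ, 1 ≤ u → u * f u = a + b * ∫ t in (1:ℝ)..(u - 1), f t) :
    f = (Ici (1:ℝ)).indicator (fun u => (a + b * ∫ t in (1:ℝ)..(u-1), f t)/u) := by
  funext u
  by_cases h : u ∈ Ici (1:ℝ)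
  · rw [indicator_of_mem h]
    have h3 := hf u h
    have hu0 : u ≠ 0 := by have : (1:ℝ) ≤ u := h; intro hh; rw [hh] at this; norm_num at this
    field_simp
    linarith
  · rw [indicator_of_notMem h]
    exact h0 u (lt_of_not_ge h)

lemma meas_f (h0 : ∀ u : ℝ, u < 1 → f u = 0)
    (hf : ∀ u : ℝ, 1 ≤ u → u * f u = a + b * ∫ t in (1:ℝ)..(u - 1), f t)
    (hint : ∀ c d : ℝ, IntervalIntegrable f volume c d) : Measurable f := by
  rw [f_eq_indicator h0 hf]
  apply Measurable.indicator ?_ measurableSet_Ici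
  apply Measurable.div ?_ measurable_id
  exact measurable_const.add (measurable_const.mul
    (((intervalIntegral.continuous_primitive hint 1).measurable).comp
      (measurable_id.sub measurable_const)))

lemma contOn_f (h0 : ∀ u : ℝ, u < 1 → f u = 0)
    (hf : ∀ u : ℝ, 1 ≤ u → u * f u = a + b * ∫ t in (1:ℝ)..(u - 1), f t)
    (hint : ∀ c d : ℝ, IntervalIntegrable f volume c d) : ContinuousOn f (Ici 1) := by
  have hc : ContinuousOn (fun u : ℝ => (a + b * ∫ t in (1:ℝ)..(u-1), f t)/u) (Ici 1) := by
    apply ContinuousOn.div ?_ continuousOn_id (fun x hx => (by exact lt_of_lt_of_le one_pos hx : (0:ℝ) < x).ne')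
    apply Continuous.continuousOn
    exact continuous_const.add (continuous_const.mul
      ((intervalIntegral.continuous_primitive hint 1).comp (continuous_id.sub continuous_const)))
  apply hc.congr
  intro u hu
  have h3 := hf u hu
  have hu0 : u ≠ 0 := by have h4 : (1:ℝ) ≤ u := hu; intro hh; rw [hh] at h4; norm_num at h4
  field_simp
  linarith

lemma bound_f (h0 : ∀ u : ℝ, u < 1 → f u = 0)
    (hf : ∀ u : ℝ, 1 ≤ u → u * f u = a + b * ∫ t in (1:ℝ)..(u - 1), f t)
    (hint : ∀ c d : ℝ, IntervalIntegrable f volume c d) (v : ℝ) :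
    ∃ M : ℝ, 0 ≤ M ∧ ∀ t : ℝ, t ≤ v → |f t| ≤ M := by
  obtain ⟨C, hC⟩ := (isCompact_Icc (a := (1:ℝ)) (b := max 1 v)).exists_bound_of_continuousOn
    ((contOn_f h0 hf hint).mono Icc_subset_Ici_self)
  refine ⟨max C 0, le_max_right _ _, fun t ht => ?_⟩
  by_cases h1 : t < 1
  · rw [h0 t h1]; simp
  · push_neg at h1
    have := hC t ⟨h1, le_max_of_le_right ht⟩
    calc |f t| ≤ C := this
    _ ≤ max C 0 := le_max_left _ _


lemma bddInt {F : ℝ → ℝ} (hm : Measurable F) {C : ℝ} {c d : ℝ}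
    (hC : ∀ x ∈ uIcc c d, |F x| ≤ C) : IntervalIntegrable F volume c d := by
  apply intervalIntegrable_iff.mpr
  apply Measure.integrableOn_of_bounded (M := C) measure_Ioc_lt_top.ne hm.aestronglyMeasurable
  have h2 : ∀ᵐ x ∂(volume.restrict (Set.uIoc c d)), x ∈ Set.uIoc c d := ae_restrict_mem measurableSet_uIoc
  filter_upwards [h2] with x hx
  rw [Real.norm_eq_abs]
  exact hC x (uIoc_subset_uIcc hx)

theorem Feqn {ω : ℝ → ℝ} (h0 : ∀ u : ℝ, u < 1 → ω u = 0)
    (hω : ∀ u : ℝ, 1 ≤ u → u * ω u = 1 + ∫ t in (1:ℝ)..(u - 1), ω t)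
    {v : ℝ} (hv : 1 ≤ v) :
    v * (2 * ω v + ∫ t in (0:ℝ)..v, ω t * ω (v - t))
      = 2 + 2 * ∫ t in (1:ℝ)..(v-1), (2 * ω t + ∫ s in (0:ℝ)..t, ω s * ω (t - s)) := by
  have hω' : ∀ u : ℝ, 1 ≤ u → u * ω u = 1 + 1 * ∫ t in (1:ℝ)..(u - 1), ω t :=
    fun u hu => by rw [one_mul]; exact hω u hu
  have hint := bootstrap h0 hω'
  have hmeas := meas_f h0 hω' hint
  have Ksmall : ∀ t : ℝ, 0 ≤ t → t < 2 → (∫ s in (0:ℝ)..t, ω s * ω (t - s)) = 0 := by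
    intro t ht0 ht2
    rw [intervalIntegral.integral_congr (g := fun _ => (0:ℝ))]
    · simp
    · intro s hs
      rw [uIcc_of_le ht0] at hs
      by_cases h1 : s < 1
      · simp [h0 s h1]
      · push_neg at h1
        have h2 : t - s < 1 := by linarith [hs.2]
        simp [h0 _ h2]
  by_cases hv2 : v < 2
  · have hKv : (∫ t in (0:ℝ)..v, ω t * ω (v - t)) = 0 := Ksmall v (by linarith) hv2
    have hRHS : (∫ t in (1:ℝ)..(v-1), (2 * ω t + ∫ s in (0:ℝ)..t, ω s * ω (t - s))) = 0 := by
      rw [intervalIntegral.integral_congr_ae (g := fun _ => (0:ℝ))]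
      · simp
      · filter_upwards [ae_ne (1:ℝ)] with x hx hmem
        have hmax : x ≤ max 1 (v-1) := hmem.2
        have hmin : min 1 (v-1) < x := hmem.1
        have hv1 : v - 1 ≤ 1 := by linarith
        have hxle : x ≤ 1 := by rwa [max_eq_left hv1] at hmax
        have hxlt : x < 1 := lt_of_le_of_ne hxle hx
        have hx0 : 0 ≤ x := by
          have h5 : (0:ℝ) ≤ min 1 (v-1) := le_min (by norm_num) (by linarith)
          linarith
        rw [h0 x hxlt, Ksmall x hx0 (by linarith)]
        ring
    rw [hKv, hRHS]
    have h6 := hω v hv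
    rw [integral_small h0 (le_refl 1) (by linarith)] at h6
    linear_combination 2 * h6
  · push_neg at hv2
    obtain ⟨M, hM0, hM⟩ := bound_f h0 hω' hint v
    have gcont : Continuous (fun x : ℝ => ∫ t in (1:ℝ)..x, ω t) :=
      intervalIntegral.continuous_primitive hint 1
    set g : ℝ → ℝ := fun x => ∫ t in (1:ℝ)..x, ω t with hgdef
    obtain ⟨Mg, hMgx⟩ := (isCompact_Icc (a := (0:ℝ)) (b := v)).exists_bound_of_continuousOn
      gcont.continuousOn
    have hMg0 : 0 ≤ Mg := le_trans (norm_nonneg _) (hMgx 0 ⟨le_refl 0, by linarith⟩)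
    have hMg : ∀ x : ℝ, 0 ≤ x → x ≤ v → |g x| ≤ Mg := by
      intro x h1 h2
      have := hMgx x ⟨h1, h2⟩
      rwa [Real.norm_eq_abs] at this
    set K : ℝ → ℝ := fun t => ∫ s in (0:ℝ)..t, ω s * ω (t - s) with hKdef
    have hv1 : (1:ℝ) ≤ v - 1 := by linarith
    have hv0 : (0:ℝ) ≤ v := by linarith
    have mωv : Measurable (fun t : ℝ => ω (v - t)) :=
      hmeas.comp (measurable_const.sub measurable_id)
    have mω2 : Measurable (fun t : ℝ => ω t * ω (v - t)) :=
      hmeas.mul (hmeas.comp (measurable_const.sub measurable_id))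
    have mφ : Measurable (fun t : ℝ => t * (ω t * ω (v - t))) := measurable_id.mul mω2
    have hsub : ∀ {c d : ℝ}, 0 ≤ c → c ≤ d → d ≤ v → ∀ x ∈ uIcc c d, 0 ≤ x ∧ x ≤ v := by
      intro c d h1 h2 h3 x hx
      rw [uIcc_of_le h2] at hx
      exact ⟨le_trans h1 hx.1, le_trans hx.2 h3⟩
    have iω2 : ∀ {c d : ℝ}, 0 ≤ c → c ≤ d → d ≤ v →
        IntervalIntegrable (fun t => ω t * ω (v - t)) volume c d := by
      intro c d h1 h2 h3
      apply bddInt mω2 (C := M * M)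
      intro x hx
      obtain ⟨hx0, hxv⟩ := hsub h1 h2 h3 x hx
      rw [abs_mul]
      exact mul_le_mul (hM x hxv) (hM _ (by linarith)) (abs_nonneg _) hM0
    have iφ : ∀ {c d : ℝ}, 0 ≤ c → c ≤ d → d ≤ v →
        IntervalIntegrable (fun t => t * (ω t * ω (v - t))) volume c d := by
      intro c d h1 h2 h3
      apply bddInt mφ (C := v * (M * M))
      intro x hx
      obtain ⟨hx0, hxv⟩ := hsub h1 h2 h3 x hx
      rw [abs_mul, abs_mul]
      have h4 : |x| ≤ v := by rw [abs_of_nonneg hx0]; exact hxv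
      exact mul_le_mul h4 (mul_le_mul (hM x hxv) (hM _ (by linarith)) (abs_nonneg _) hM0)
        (by positivity) (by linarith)
    have s1 : v * ω v = 1 + g (v - 1) := hω v hv
    have hconst : v * K v = ∫ t in (0:ℝ)..v, v * (ω t * ω (v - t)) := by
      rw [intervalIntegral.integral_const_mul]
    have iψ : IntervalIntegrable (fun t => (v - t) * (ω t * ω (v - t))) volume 0 v := by
      apply bddInt ((measurable_const.sub measurable_id).mul mω2) (C := v * (M * M))
      intro x hx
      obtain ⟨hx0, hxv⟩ := hsub le_rfl hv0 le_rfl x hx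
      show |(v - x) * (ω x * ω (v - x))| ≤ v * (M * M)
      rw [abs_mul, abs_mul]
      have h4 : |v - x| ≤ v := by rw [abs_of_nonneg (by linarith)]; linarith
      exact mul_le_mul h4 (mul_le_mul (hM x hxv) (hM _ (by linarith)) (abs_nonneg _) hM0)
        (by positivity) (by linarith)
    have hAB : (∫ t in (0:ℝ)..v, v * (ω t * ω (v - t)))
        = (∫ t in (0:ℝ)..v, t * (ω t * ω (v - t)))
          + ∫ t in (0:ℝ)..v, (v - t) * (ω t * ω (v - t)) := by
      rw [← intervalIntegral.integral_add (iφ le_rfl hv0 le_rfl) iψ]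
      apply intervalIntegral.integral_congr
      intro x _
      simp only
      ring
    have hBA : (∫ t in (0:ℝ)..v, (v - t) * (ω t * ω (v - t)))
        = ∫ t in (0:ℝ)..v, t * (ω t * ω (v - t)) := by
      have h5 : (∫ t in (0:ℝ)..v, (v - t) * (ω t * ω (v - t)))
          = ∫ t in (0:ℝ)..v, (fun r => r * (ω r * ω (v - r))) (v - t) := by
        apply intervalIntegral.integral_congr
        intro x _
        simp only
        rw [show v - (v - x) = x by ring]
        ring
      rw [h5, intervalIntegral.integral_comp_sub_left (fun r => r * (ω r * ω (v - r))) v]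
      norm_num
    have adj1 : (∫ t in (0:ℝ)..1, t * (ω t * ω (v - t)))
        + (∫ t in (1:ℝ)..(v-1), t * (ω t * ω (v - t)))
        = ∫ t in (0:ℝ)..(v-1), t * (ω t * ω (v - t)) :=
      intervalIntegral.integral_add_adjacent_intervals (iφ le_rfl (by norm_num) (by linarith))
        (iφ (by norm_num) hv1 (by linarith))
    have adj2 : (∫ t in (0:ℝ)..(v-1), t * (ω t * ω (v - t)))
        + (∫ t in (v-1)..v, t * (ω t * ω (v - t)))
        = ∫ t in (0:ℝ)..v, t * (ω t * ω (v - t)) :=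
      intervalIntegral.integral_add_adjacent_intervals (iφ le_rfl (by linarith) (by linarith))
        (iφ (by linarith) (by linarith) le_rfl)
    have piece1 : (∫ t in (0:ℝ)..1, t * (ω t * ω (v - t))) = 0 := by
      rw [intervalIntegral.integral_congr_ae (g := fun _ => (0:ℝ))]
      · simp
      · filter_upwards [ae_ne (1:ℝ)] with x hx hmem
        have h6 : x ≤ max 0 1 := hmem.2
        have hxlt : x < 1 := lt_of_le_of_ne (by simpa using h6) hx
        rw [h0 x hxlt]
        ring
    have piece3 : (∫ t in (v-1)..v, t * (ω t * ω (v - t))) = 0 := by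
      rw [intervalIntegral.integral_congr_ae (g := fun _ => (0:ℝ))]
      · simp
      · refine Filter.Eventually.of_forall ?_
        intro x hmem
        have h7 : min (v-1) v < x := hmem.1
        rw [min_eq_left (by linarith)] at h7
        rw [h0 (v - x) (by linarith)]
        ring
    have hA : (∫ t in (0:ℝ)..v, t * (ω t * ω (v - t)))
        = ∫ t in (1:ℝ)..(v-1), t * (ω t * ω (v - t)) := by
      rw [← adj2, ← adj1, piece1, piece3]
      ring
    have ia : IntervalIntegrable (fun t => ω (v - t)) volume 1 (v-1) := by
      apply bddInt mωv (C := M)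
      intro x hx
      obtain ⟨hx0, hxv⟩ := hsub (by norm_num) hv1 (by linarith) x hx
      exact hM _ (by linarith)
    have ib : IntervalIntegrable (fun t => g (t - 1) * ω (v - t)) volume 1 (v-1) := by
      have mgg : Measurable (fun t : ℝ => g (t - 1) * ω (v - t)) :=
        ((gcont.comp (continuous_id.sub continuous_const)).measurable).mul mωv
      apply bddInt mgg (C := Mg * M)
      intro x hx
      rw [uIcc_of_le hv1] at hx
      rw [abs_mul]
      exact mul_le_mul (hMg _ (by linarith [hx.1]) (by linarith [hx.2]))
        (hM _ (by linarith [hx.1])) (abs_nonneg _) hMg0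
    have hφexp : (∫ t in (1:ℝ)..(v-1), t * (ω t * ω (v - t)))
        = (∫ t in (1:ℝ)..(v-1), ω (v - t)) + ∫ t in (1:ℝ)..(v-1), g (t - 1) * ω (v - t) := by
      rw [← intervalIntegral.integral_add ia ib]
      apply intervalIntegral.integral_congr
      intro x hx
      rw [uIcc_of_le hv1] at hx
      have h9 : x * ω x = 1 + g (x - 1) := hω x hx.1
      show x * (ω x * ω (v - x)) = ω (v - x) + g (x - 1) * ω (v - x)
      calc x * (ω x * ω (v - x)) = (x * ω x) * ω (v - x) := by ring
        _ = (1 + g (x - 1)) * ω (v - x) := by rw [h9]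
        _ = ω (v - x) + g (x - 1) * ω (v - x) := by ring
    have e1 : (∫ t in (1:ℝ)..(v-1), ω (v - t)) = g (v - 1) := by
      rw [intervalIntegral.integral_comp_sub_left ω v]
      rw [show v - (v - 1) = (1:ℝ) by ring]
    have Jalt : (∫ t in (1:ℝ)..(v-1), g (t - 1) * ω (v - t))
        = ∫ t in (1:ℝ)..(v-1), ω t * g (v - 1 - t) := by
      have h10 := intervalIntegral.integral_comp_sub_left (a := 1) (b := v - 1)
        (fun r => g (r - 1) * ω (v - r)) v
      rw [show v - (v - 1) = (1:ℝ) by ring] at h10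
      rw [← h10]
      apply intervalIntegral.integral_congr
      intro x _
      simp only
      rw [show v - x - 1 = v - 1 - x by ring, show v - (v - x) = x by ring]
      ring
    set D : Set (ℝ × ℝ) := {p : ℝ × ℝ | (1 < p.1 ∧ p.1 ≤ v - 1) ∧ (0 < p.2 ∧ p.2 ≤ p.1)} with hD
    have hDmeas : MeasurableSet D := by
      apply MeasurableSet.inter
      · exact (measurableSet_lt measurable_const measurable_fst).inter
          (measurableSet_le measurable_fst measurable_const)
      · exact (measurableSet_lt measurable_const measurable_snd).inter
          (measurableSet_le measurable_snd measurable_fst)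
    set G : ℝ × ℝ → ℝ := D.indicator (fun p => ω p.2 * ω (p.1 - p.2)) with hG
    have hGmeas : Measurable G :=
      ((hmeas.comp measurable_snd).mul
        (hmeas.comp (measurable_fst.sub measurable_snd))).indicator hDmeas
    have hGbd : ∀ p : ℝ × ℝ, ‖G p‖ ≤ (Icc (0:ℝ) v ×ˢ Icc (0:ℝ) v).indicator (fun _ => M * M) p := by
      intro p
      rw [Real.norm_eq_abs]
      by_cases hp : p ∈ D
      · obtain ⟨⟨h1, h2⟩, h3, h4⟩ := id hp
        have hpm : p ∈ Icc (0:ℝ) v ×ˢ Icc (0:ℝ) v :=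
          ⟨⟨by linarith, by linarith⟩, ⟨by linarith, by linarith⟩⟩
        rw [hG, indicator_of_mem hp, indicator_of_mem hpm, abs_mul]
        exact mul_le_mul (hM _ (by linarith)) (hM _ (by linarith)) (abs_nonneg _) hM0
      · rw [hG, indicator_of_notMem hp]
        simp only [abs_zero]
        exact indicator_apply_nonneg (fun _ => by positivity)
    have hGint : Integrable G := by
      apply Integrable.mono' ?_ hGmeas.aestronglyMeasurable (Filter.Eventually.of_forall hGbd)
      apply IntegrableOn.integrable_indicator ?_ (measurableSet_Icc.prod measurableSet_Icc)
      rw [integrableOn_const_iff]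
      right
      exact (isCompact_Icc.prod isCompact_Icc).measure_lt_top
    have hGint' : Integrable (Function.uncurry fun t s => G (t, s)) (volume.prod volume) := by
      rw [← Measure.volume_eq_prod]
      exact hGint
    have hcurryL : ∀ t : ℝ, (∫ s : ℝ, G (t, s)) = (Ioc (1:ℝ) (v-1)).indicator K t := by
      intro t
      by_cases ht : t ∈ Ioc (1:ℝ) (v-1)
      · rw [indicator_of_mem ht]
        have hGt : ∀ s : ℝ, G (t, s) = (Ioc (0:ℝ) t).indicator (fun s => ω s * ω (t - s)) s := by
          intro s
          by_cases hs : s ∈ Ioc (0:ℝ) t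
          · rw [indicator_of_mem hs, hG,
              indicator_of_mem (show (t, s) ∈ D from ⟨⟨ht.1, ht.2⟩, hs.1, hs.2⟩)]
          · rw [indicator_of_notMem hs, hG,
              indicator_of_notMem (fun hD' => hs ⟨hD'.2.1, hD'.2.2⟩)]
        simp_rw [hGt]
        rw [integral_indicator measurableSet_Ioc, hKdef]
        simp only
        rw [intervalIntegral.integral_of_le (by linarith [ht.1] : (0:ℝ) ≤ t)]
      · rw [indicator_of_notMem ht]
        have hGt : ∀ s : ℝ, G (t, s) = 0 := fun s =>
          indicator_of_notMem (fun hD' => ht ⟨hD'.1.1, hD'.1.2⟩) _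
        simp_rw [hGt]
        simp
    have hKint : IntegrableOn K (Ioc (1:ℝ) (v-1)) := by
      have h1 := hGint'.integral_prod_left
      have h2 : Integrable ((Ioc (1:ℝ) (v-1)).indicator K) :=
        h1.congr (Filter.Eventually.of_forall (fun t => hcurryL t))
      exact (integrable_indicator_iff measurableSet_Ioc).mp h2
    have hKii : IntervalIntegrable K volume 1 (v-1) :=
      (intervalIntegrable_iff_integrableOn_Ioc_of_le hv1).mpr hKint
    have hswapL : (∫ t : ℝ, ∫ s : ℝ, G (t, s)) = ∫ t in (1:ℝ)..(v-1), K t := by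
      calc (∫ t : ℝ, ∫ s : ℝ, G (t, s))
          = ∫ t : ℝ, (Ioc (1:ℝ) (v-1)).indicator K t :=
            MeasureTheory.integral_congr_ae (Filter.Eventually.of_forall hcurryL)
        _ = ∫ t in Ioc (1:ℝ) (v-1), K t := integral_indicator measurableSet_Ioc
        _ = ∫ t in (1:ℝ)..(v-1), K t := (intervalIntegral.integral_of_le hv1).symm
    have hcurryR : ∀ s : ℝ, (∫ t : ℝ, G (t, s))
        = (Ioc (0:ℝ) (v-1)).indicator (fun s => ω s * g (v - 1 - s)) s := by
      intro s
      by_cases hs : s ∈ Ioc (0:ℝ) (v-1)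
      · rw [indicator_of_mem hs]
        by_cases hs1 : s < 1
        · have hω0s : ω s = 0 := h0 s hs1
          have hGt : ∀ t : ℝ, G (t, s) = 0 := by
            intro t
            rw [hG]
            by_cases hD' : (t, s) ∈ D
            · rw [indicator_of_mem hD']
              simp [hω0s]
            · exact indicator_of_notMem hD' _
          simp_rw [hGt]
          rw [integral_zero, hω0s]
          ring
        · push_neg at hs1
          have hae : (fun t => G (t, s))
              =ᵐ[volume] (Ioc s (v-1)).indicator (fun t => ω s * ω (t - s)) := by
            filter_upwards [ae_ne s] with t hts
            by_cases hmem : t ∈ Ioc s (v-1)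
            · rw [indicator_of_mem hmem, hG,
                indicator_of_mem (show (t, s) ∈ D from
                  ⟨⟨lt_of_le_of_lt hs1 hmem.1, hmem.2⟩, hs.1, le_of_lt hmem.1⟩)]
            · rw [indicator_of_notMem hmem, hG]
              apply indicator_of_notMem
              intro hD'
              exact hmem ⟨lt_of_le_of_ne hD'.2.2 (Ne.symm hts), hD'.1.2⟩
          rw [MeasureTheory.integral_congr_ae hae, integral_indicator measurableSet_Ioc,
            ← intervalIntegral.integral_of_le hs.2, intervalIntegral.integral_const_mul]
          congr 1
          rw [intervalIntegral.integral_comp_sub_right (fun r => ω r) s, sub_self]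
          rw [← intervalIntegral.integral_add_adjacent_intervals (hint 0 1) (hint 1 (v-1-s))]
          rw [integral_small h0 (by norm_num) le_rfl, zero_add]
      · rw [indicator_of_notMem hs]
        have hGt : ∀ t : ℝ, G (t, s) = 0 := by
          intro t
          rw [hG]
          apply indicator_of_notMem
          intro hD'
          exact hs ⟨hD'.2.1, le_trans hD'.2.2 hD'.1.2⟩
        simp_rw [hGt]
        simp
    have mgω : Measurable (fun s : ℝ => ω s * g (v - 1 - s)) :=
      hmeas.mul ((gcont.comp (continuous_const.sub continuous_id)).measurable)
    have igω : ∀ {c d : ℝ}, 0 ≤ c → c ≤ d → d ≤ v - 1 →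
        IntervalIntegrable (fun s => ω s * g (v - 1 - s)) volume c d := by
      intro c d h1 h2 h3
      apply bddInt mgω (C := M * Mg)
      intro x hx
      rw [uIcc_of_le h2] at hx
      rw [abs_mul]
      exact mul_le_mul (hM _ (by linarith [hx.2])) (hMg _ (by linarith [hx.2]) (by linarith [hx.1]))
        (abs_nonneg _) hM0
    have hswapR : (∫ s : ℝ, ∫ t : ℝ, G (t, s)) = ∫ s in (1:ℝ)..(v-1), ω s * g (v - 1 - s) := by
      have z1 : (∫ s in (0:ℝ)..1, ω s * g (v - 1 - s)) = 0 := by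
        rw [intervalIntegral.integral_congr_ae (g := fun _ => (0:ℝ))]
        · simp
        · filter_upwards [ae_ne (1:ℝ)] with x hx hmem
          have h6 : x ≤ max 0 1 := hmem.2
          have hxlt : x < 1 := lt_of_le_of_ne (by simpa using h6) hx
          rw [h0 x hxlt]
          ring
      calc (∫ s : ℝ, ∫ t : ℝ, G (t, s))
          = ∫ s : ℝ, (Ioc (0:ℝ) (v-1)).indicator (fun s => ω s * g (v - 1 - s)) s :=
            MeasureTheory.integral_congr_ae (Filter.Eventually.of_forall hcurryR)
        _ = ∫ s in Ioc (0:ℝ) (v-1), ω s * g (v - 1 - s) := integral_indicator measurableSet_Ioc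
        _ = ∫ s in (0:ℝ)..(v-1), ω s * g (v - 1 - s) :=
            (intervalIntegral.integral_of_le (by linarith)).symm
        _ = (∫ s in (0:ℝ)..1, ω s * g (v - 1 - s)) + ∫ s in (1:ℝ)..(v-1), ω s * g (v - 1 - s) :=
            (intervalIntegral.integral_add_adjacent_intervals
              (igω le_rfl (by norm_num) (by linarith)) (igω (by norm_num) hv1 le_rfl)).symm
        _ = ∫ s in (1:ℝ)..(v-1), ω s * g (v - 1 - s) := by rw [z1, zero_add]
    have hswap : (∫ t : ℝ, ∫ s : ℝ, G (t, s)) = ∫ s : ℝ, ∫ t : ℝ, G (t, s) :=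
      MeasureTheory.integral_integral_swap hGint'
    have hKJ : (∫ t in (1:ℝ)..(v-1), K t) = ∫ t in (1:ℝ)..(v-1), g (t - 1) * ω (v - t) := by
      rw [← hswapL, hswap, hswapR, ← Jalt]
    have hRHSexp : (∫ t in (1:ℝ)..(v-1), (2 * ω t + K t))
        = 2 * g (v - 1) + ∫ t in (1:ℝ)..(v-1), K t := by
      rw [intervalIntegral.integral_add ((hint 1 (v-1)).const_mul 2) hKii,
        intervalIntegral.integral_const_mul]
    have hvKv : v * K v = 2 * (g (v - 1) + ∫ t in (1:ℝ)..(v-1), g (t - 1) * ω (v - t)) := by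
      calc v * K v
          = (∫ t in (0:ℝ)..v, t * (ω t * ω (v - t)))
            + ∫ t in (0:ℝ)..v, (v - t) * (ω t * ω (v - t)) := by rw [hconst, hAB]
        _ = 2 * ∫ t in (0:ℝ)..v, t * (ω t * ω (v - t)) := by rw [hBA]; ring
        _ = 2 * ((∫ t in (1:ℝ)..(v-1), ω (v - t))
            + ∫ t in (1:ℝ)..(v-1), g (t - 1) * ω (v - t)) := by rw [hA, hφexp]
        _ = 2 * (g (v - 1) + ∫ t in (1:ℝ)..(v-1), g (t - 1) * ω (v - t)) := by rw [e1]
    calc v * (2 * ω v + K v) = 2 * (v * ω v) + v * K v := by ring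
      _ = 2 * (1 + g (v - 1))
          + 2 * (g (v - 1) + ∫ t in (1:ℝ)..(v-1), g (t - 1) * ω (v - t)) := by rw [s1, hvKv]
      _ = 2 + 2 * (2 * g (v - 1) + ∫ t in (1:ℝ)..(v-1), g (t - 1) * ω (v - t)) := by ring
      _ = 2 + 2 * (2 * g (v - 1) + ∫ t in (1:ℝ)..(v-1), K t) := by rw [hKJ]
      _ = 2 + 2 * ∫ t in (1:ℝ)..(v-1), (2 * ω t + K t) := by rw [hRHSexp]

end XB

open XB in
theorem xi_eq_buchstab_convolution (ξ ω : ℝ → ℝ)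
    (hξ0 : ∀ u : ℝ, u < 1 → ξ u = 0)
    (hξ : ∀ u : ℝ, 1 ≤ u → u * ξ u = 2 + 2 * ∫ t in (1:ℝ)..(u - 1), ξ t)
    (hω0 : ∀ u : ℝ, u < 1 → ω u = 0)
    (hω : ∀ u : ℝ, 1 ≤ u → u * ω u = 1 + ∫ t in (1:ℝ)..(u - 1), ω t) :
    ∀ u : ℝ, 0 ≤ u → ξ u = 2 * ω u + ∫ t in (0:ℝ)..u, ω t * ω (u - t) := by
  intro u hu
  set F : ℝ → ℝ := fun w => 2 * ω w + ∫ t in (0:ℝ)..w, ω t * ω (w - t) with hF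
  have hF0 : ∀ w : ℝ, w < 1 → F w = 0 := by
    intro w hw
    have hconv : (∫ t in (0:ℝ)..w, ω t * ω (w - t)) = 0 := by
      rw [intervalIntegral.integral_congr (g := fun _ => (0:ℝ))]
      · simp
      · intro x hx
        have hx2 : x ≤ max 0 w := hx.2
        have : x < 1 := lt_of_le_of_lt hx2 (max_lt one_pos hw)
        simp [hω0 x this]
    rw [hF]
    simp only
    rw [hconv, hω0 w hw]
    ring
  have main : ∀ n : ℕ, ∀ w : ℝ, w ≤ (n:ℝ) + 1 → ξ w = F w := by
    intro n
    induction n with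
    | zero =>
      intro w hw
      by_cases h1 : w < 1
      · rw [hξ0 w h1, hF0 w h1]
      · have hw1 : w = 1 := le_antisymm (by simpa using hw) (not_lt.mp h1)
        subst hw1
        have e1 : ξ 1 = 2 := by
          have h2 := hξ 1 le_rfl
          rw [show (1:ℝ) - 1 = 0 by ring, integral_small hξ0 le_rfl (by norm_num)] at h2
          linarith
        have e2 : (1:ℝ) * F 1 = 2 + 2 * ∫ t in (1:ℝ)..(1-1:ℝ), F t := Feqn hω0 hω le_rfl
        rw [show (1:ℝ) - 1 = 0 by ring, integral_small hF0 le_rfl (by norm_num)] at e2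
        rw [e1]
        linarith
    | succ n ih =>
      intro w hw
      by_cases hle : w ≤ (n:ℝ) + 1
      · exact ih w hle
      · push_neg at hle
        have hn0 : (0:ℝ) ≤ n := Nat.cast_nonneg n
        have h1w : (1:ℝ) ≤ w := by linarith
        have hw1 : w - 1 ≤ (n:ℝ) + 1 := by push_cast at hw; linarith
        have hcongr : (∫ t in (1:ℝ)..(w-1), ξ t) = ∫ t in (1:ℝ)..(w-1), F t := by
          apply intervalIntegral.integral_congr
          intro x hx
          apply ih
          have hx2 : x ≤ max 1 (w-1) := hx.2
          exact hx2.trans (max_le (by linarith) hw1)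
        have e2 : w * F w = 2 + 2 * ∫ t in (1:ℝ)..(w-1), F t := Feqn hω0 hω h1w
        have e1 := hξ w h1w
        rw [hcongr] at e1
        have hw0 : w ≠ 0 := by intro h; rw [h] at h1w; norm_num at h1w
        apply mul_left_cancel₀ hw0
        rw [e1, e2]
  obtain ⟨n, hn⟩ := exists_nat_ge u
  exact main n u (by linarith)
end

section
/- Suppose θ : ℕ → ℝ∪{∞} satisfies θ(1) ≥ 2 and θ(n) ≥ P^+(n) for all n ≥ 2, and let f be a multiplicative arithmetic function. Then for every x ≥ 0: Σ_{m ≤ x} f(m) = Σ_{n ∈ B_θ, n ≤ x} f(n) · ( 1 + Σ_{2 ≤ r ≤ x/n, P^-(r) > θ(n)} f(r) ). -/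
open Real MeasureTheory
open scoped Classical

/-- The set `B_θ` for `θ : ℕ → ℝ ∪ {∞}` (i.e. `EReal`-valued): `1 ∈ B_θ`, and
`n = p₁^{α₁}⋯p_k^{α_k}` (with `p₁ < ⋯ < p_k`) belongs to `B_θ` iff
`p_i ≤ θ(p₁^{α₁}⋯p_{i-1}^{α_{i-1}})` for all `i`. -/
def BsetE (θ : ℕ → EReal) : Set ℕ :=
  {n | 0 < n ∧ ∀ p : ℕ, p.Prime → p ∣ n →
    (((p : ℝ) : EReal)) ≤ θ (∏ q ∈ n.primeFactors.filter (· < p), q ^ n.factorization q)}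

namespace FQ

/-- prefix of m below p -/
noncomputable def pref (m p : ℕ) : ℕ :=
  ∏ q ∈ m.primeFactors.filter (· < p), q ^ m.factorization q

noncomputable def Sf (θ : ℕ → EReal) (m : ℕ) : Finset ℕ :=
  m.primeFactors.filter fun p => ∀ q ∈ m.primeFactors, q ≤ p →
    ((q : ℝ) : EReal) ≤ θ (pref m q)

noncomputable def nPart (θ : ℕ → EReal) (m : ℕ) : ℕ := ∏ p ∈ Sf θ m, p ^ m.factorization p
noncomputable def rPart (θ : ℕ → EReal) (m : ℕ) : ℕ :=
  ∏ p ∈ m.primeFactors \ Sf θ m, p ^ m.factorization p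

lemma Sf_subset (θ : ℕ → EReal) (m : ℕ) : Sf θ m ⊆ m.primeFactors := Finset.filter_subset _ _

lemma Sf_down {θ : ℕ → EReal} {m p q : ℕ} (hp : p ∈ Sf θ m) (hq : q ∈ m.primeFactors)
    (hqp : q ≤ p) : q ∈ Sf θ m := by
  rw [Sf, Finset.mem_filter] at hp ⊢
  exact ⟨hq, fun q' hq' hq'q => hp.2 q' hq' (hq'q.trans hqp)⟩

lemma Sf_cond {θ : ℕ → EReal} {m p : ℕ} (hp : p ∈ Sf θ m) :
    ((p : ℝ) : EReal) ≤ θ (pref m p) := by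
  rw [Sf, Finset.mem_filter] at hp
  exact hp.2 p hp.1 le_rfl

lemma prodPow_pos {m : ℕ} {t : Finset ℕ} (ht : t ⊆ m.primeFactors) :
    0 < ∏ p ∈ t, p ^ m.factorization p :=
  Finset.prod_pos fun p hp => pow_pos (Nat.prime_of_mem_primeFactors (ht hp)).pos _

lemma prod_primeFactors_pow (m : ℕ) (hm : m ≠ 0) :
    ∏ p ∈ m.primeFactors, p ^ m.factorization p = m := by
  conv_rhs => rw [← Nat.factorization_prod_pow_eq_self hm]
  rfl

lemma mul_nPart_rPart (θ : ℕ → EReal) {m : ℕ} (hm : m ≠ 0) :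
    nPart θ m * rPart θ m = m := by
  rw [nPart, rPart, mul_comm, Finset.prod_sdiff (Sf_subset θ m)]
  exact prod_primeFactors_pow m hm

lemma factorization_prodPow {m : ℕ} {t : Finset ℕ} (ht : t ⊆ m.primeFactors) (q : ℕ) :
    (∏ p ∈ t, p ^ m.factorization p).factorization q =
      if q ∈ t then m.factorization q else 0 := by
  rw [Nat.factorization_prod fun p hp =>
      pow_ne_zero _ (Nat.prime_of_mem_primeFactors (ht hp)).pos.ne']
  rw [show (∑ p ∈ t, (p ^ m.factorization p).factorization) =
      ∑ p ∈ t, Finsupp.single p (m.factorization p) from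
    Finset.sum_congr rfl fun p hp =>
      Nat.Prime.factorization_pow (Nat.prime_of_mem_primeFactors (ht hp))]
  rw [Finsupp.finset_sum_apply]
  simp only [Finsupp.single_apply]
  exact Finset.sum_ite_eq' t q _

lemma primeFactors_prodPow {m : ℕ} {t : Finset ℕ} (ht : t ⊆ m.primeFactors) :
    (∏ p ∈ t, p ^ m.factorization p).primeFactors = t := by
  ext q
  rw [← Nat.support_factorization, Finsupp.mem_support_iff, factorization_prodPow ht]
  constructor
  · intro h
    by_contra hq
    simp [hq] at h
  · intro hq
    simp only [hq, if_true]
    have := ht hq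
    rw [← Nat.support_factorization, Finsupp.mem_support_iff] at this
    exact this

end FQ

namespace FQ

lemma mem_BsetE_iff {θ : ℕ → EReal} {n : ℕ} :
    n ∈ BsetE θ ↔ 0 < n ∧ ∀ p : ℕ, p.Prime → p ∣ n →
      ((p : ℝ) : EReal) ≤ θ (pref n p) := Iff.rfl

lemma pref_nPart {θ : ℕ → EReal} {m p : ℕ} (hp : p ∈ Sf θ m) :
    pref (nPart θ m) p = pref m p := by
  have hsub := Sf_subset θ m
  have hpf : (nPart θ m).primeFactors = Sf θ m := primeFactors_prodPow hsub
  rw [pref, pref, hpf]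
  have hfilter : (Sf θ m).filter (· < p) = m.primeFactors.filter (· < p) := by
    ext q
    simp only [Finset.mem_filter]
    exact ⟨fun h => ⟨hsub h.1, h.2⟩, fun h => ⟨Sf_down hp h.1 h.2.le, h.2⟩⟩
  rw [hfilter]
  refine Finset.prod_congr rfl fun q hq => ?_
  rw [Finset.mem_filter] at hq
  have hqS : q ∈ Sf θ m := Sf_down hp hq.1 hq.2.le
  rw [nPart, factorization_prodPow hsub, if_pos hqS]

lemma nPart_pos (θ : ℕ → EReal) (m : ℕ) : 0 < nPart θ m := prodPow_pos (Sf_subset θ m)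

lemma rPart_pos (θ : ℕ → EReal) (m : ℕ) : 0 < rPart θ m :=
  prodPow_pos (Finset.sdiff_subset)

lemma nPart_mem_BsetE (θ : ℕ → EReal) (m : ℕ) : nPart θ m ∈ BsetE θ := by
  refine ⟨nPart_pos θ m, ?_⟩
  intro p hp hdvd
  show ((p : ℝ) : EReal) ≤ θ (pref (nPart θ m) p)
  have hpmem : p ∈ (nPart θ m).primeFactors :=
    Nat.mem_primeFactors.2 ⟨hp, hdvd, (nPart_pos θ m).ne'⟩
  have hpfeq : (nPart θ m).primeFactors = Sf θ m := primeFactors_prodPow (Sf_subset θ m)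
  rw [hpfeq] at hpmem
  have h := Sf_cond hpmem
  rw [← pref_nPart hpmem] at h
  exact h

lemma rPart_cond {θ : ℕ → EReal} {m : ℕ} (hr : rPart θ m ≠ 1) :
    θ (nPart θ m) < (((rPart θ m).minFac : ℝ) : EReal) := by
  set p' := (rPart θ m).minFac with hp'def
  have hpf : (rPart θ m).primeFactors = m.primeFactors \ Sf θ m :=
    primeFactors_prodPow Finset.sdiff_subset
  have hp'p : p'.Prime := Nat.minFac_prime hr
  have hp'mem : p' ∈ (rPart θ m).primeFactors :=
    Nat.mem_primeFactors.2 ⟨hp'p, Nat.minFac_dvd _, (rPart_pos θ m).ne'⟩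
  rw [hpf, Finset.mem_sdiff] at hp'mem
  obtain ⟨hp'm, hp'S⟩ := hp'mem
  have hmin : ∀ q ∈ m.primeFactors \ Sf θ m, p' ≤ q := by
    intro q hq
    rw [← hpf] at hq
    exact Nat.minFac_le_of_dvd (Nat.prime_of_mem_primeFactors hq).two_le
      (Nat.dvd_of_mem_primeFactors hq)
  have hfilter : m.primeFactors.filter (· < p') = Sf θ m := by
    ext q
    rw [Finset.mem_filter]
    constructor
    · rintro ⟨hq, hqlt⟩
      by_contra hqS
      exact absurd hqlt (not_lt.2 (hmin q (Finset.mem_sdiff.2 ⟨hq, hqS⟩)))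
    · intro hq
      refine ⟨Sf_subset θ m hq, ?_⟩
      by_contra hlt
      exact hp'S (Sf_down hq hp'm (not_lt.1 hlt))
  have hprefn : pref m p' = nPart θ m := by
    rw [pref, hfilter]; rfl
  -- p' ∉ Sf means the condition fails at some q ≤ p', and it must be q = p'
  rw [Sf, Finset.mem_filter, not_and] at hp'S
  have := hp'S hp'm
  push_neg at this
  obtain ⟨q, hqm, hqle, hqcond⟩ := this
  have hq' : q = p' := by
    rcases lt_or_eq_of_le hqle with h | h
    · exfalso
      have : q ∈ Sf θ m := by
        rw [← hfilter]; exact Finset.mem_filter.2 ⟨hqm, h⟩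
      exact absurd (Sf_cond this) (not_le.2 hqcond)
    · exact h
  subst hq'
  rw [hprefn] at hqcond
  exact hqcond

end FQ

namespace FQ

lemma natCast_lt_of_ereal {p q : ℕ} (h : ((p : ℝ) : EReal) < ((q : ℝ) : EReal)) : p < q := by
  rw [EReal.coe_lt_coe_iff] at h
  exact_mod_cast h

lemma recon {θ : ℕ → EReal}
    (hθP : ∀ n : ℕ, 2 ≤ n → ∀ p : ℕ, p.Prime → p ∣ n → ((p : ℝ) : EReal) ≤ θ n)
    {n r : ℕ} (hn : n ∈ BsetE θ)
    (hr : r = 1 ∨ (2 ≤ r ∧ θ n < ((r.minFac : ℝ) : EReal))) :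
    Nat.Coprime n r ∧ nPart θ (n * r) = n ∧ rPart θ (n * r) = r := by
  have hn0 : 0 < n := hn.1
  have hr0 : 0 < r := by rcases hr with rfl | ⟨h, _⟩ <;> omega
  -- every prime of n is smaller than every prime of r
  have key : ∀ p ∈ n.primeFactors, ∀ q ∈ r.primeFactors, p < q := by
    intro p hp q hq
    rcases hr with rfl | ⟨hr2, hlt⟩
    · simp at hq
    · have hn2 : 2 ≤ n := by
        have := (Nat.prime_of_mem_primeFactors hp).two_le
        have := Nat.le_of_dvd hn0 (Nat.dvd_of_mem_primeFactors hp)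
        omega
      have h1 : ((p : ℝ) : EReal) ≤ θ n :=
        hθP n hn2 p (Nat.prime_of_mem_primeFactors hp) (Nat.dvd_of_mem_primeFactors hp)
      have h2 : r.minFac ≤ q := Nat.minFac_le_of_dvd
        (Nat.prime_of_mem_primeFactors hq).two_le (Nat.dvd_of_mem_primeFactors hq)
      have h3 : ((r.minFac : ℝ) : EReal) ≤ ((q : ℝ) : EReal) := by
        rw [EReal.coe_le_coe_iff]; exact_mod_cast h2
      exact natCast_lt_of_ereal (lt_of_le_of_lt h1 (lt_of_lt_of_le hlt h3))
  have hcop : Nat.Coprime n r := by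
    by_contra h
    rw [Nat.Prime.not_coprime_iff_dvd] at h
    obtain ⟨p, hp, hpn, hpr⟩ := h
    exact lt_irrefl p (key p (Nat.mem_primeFactors.2 ⟨hp, hpn, hn0.ne'⟩)
      p (Nat.mem_primeFactors.2 ⟨hp, hpr, hr0.ne'⟩))
  have hm0 : n * r ≠ 0 := by positivity
  have hpfU : (n * r).primeFactors = n.primeFactors ∪ r.primeFactors :=
    Nat.primeFactors_mul hn0.ne' hr0.ne'
  have hfacn : ∀ q ∈ n.primeFactors, (n * r).factorization q = n.factorization q := by
    intro q hq
    rw [Nat.factorization_mul hn0.ne' hr0.ne', Finsupp.add_apply]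
    have : r.factorization q = 0 := by
      rw [← Finsupp.notMem_support_iff, Nat.support_factorization]
      intro hqr
      exact lt_irrefl q (key q hq q hqr)
    omega
  -- pref transfer
  have hprefEq : ∀ p : ℕ, (∀ q ∈ r.primeFactors, ¬ q < p) → pref (n * r) p = pref n p := by
    intro p hp
    rw [pref, pref, hpfU]
    have hfe : (n.primeFactors ∪ r.primeFactors).filter (· < p) =
        n.primeFactors.filter (· < p) := by
      ext q
      simp only [Finset.mem_filter, Finset.mem_union]
      constructor
      · rintro ⟨hq | hq, hlt⟩
        · exact ⟨hq, hlt⟩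
        · exact absurd hlt (hp q hq)
      · rintro ⟨hq, hlt⟩; exact ⟨Or.inl hq, hlt⟩
    rw [hfe]
    exact Finset.prod_congr rfl fun q hq => by
      rw [hfacn q (Finset.mem_filter.1 hq).1]
  have hSf : Sf θ (n * r) = n.primeFactors := by
    ext p
    constructor
    · intro hp
      by_contra hpn
      have hpr : p ∈ r.primeFactors := by
        have := Sf_subset θ (n * r) hp
        rw [hpfU, Finset.mem_union] at this
        tauto
      rcases hr with rfl | ⟨hr2, hlt⟩
      · simp at hpr
      · have hrne1 : r ≠ 1 := by omega
        set p0 := r.minFac with hp0def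
        have hp0p : p0.Prime := Nat.minFac_prime hrne1
        have hp0r : p0 ∈ r.primeFactors :=
          Nat.mem_primeFactors.2 ⟨hp0p, Nat.minFac_dvd r, hr0.ne'⟩
        have hp0m : p0 ∈ (n * r).primeFactors := by
          rw [hpfU, Finset.mem_union]; exact Or.inr hp0r
        have hp0le : p0 ≤ p := Nat.minFac_le_of_dvd
          (Nat.prime_of_mem_primeFactors hpr).two_le (Nat.dvd_of_mem_primeFactors hpr)
        have hcond : ((p0 : ℝ) : EReal) ≤ θ (pref (n * r) p0) := by
          rw [Sf, Finset.mem_filter] at hp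
          exact hp.2 p0 hp0m hp0le
        have hprefn : pref (n * r) p0 = n := by
          rw [pref, hpfU]
          have hfe : (n.primeFactors ∪ r.primeFactors).filter (· < p0) = n.primeFactors := by
            ext q
            simp only [Finset.mem_filter, Finset.mem_union]
            constructor
            · rintro ⟨hq | hq, hlt⟩
              · exact hq
              · exact absurd hlt (not_lt.2 (Nat.minFac_le_of_dvd
                  (Nat.prime_of_mem_primeFactors hq).two_le (Nat.dvd_of_mem_primeFactors hq)))
            · intro hq
              exact ⟨Or.inl hq, key q hq p0 hp0r⟩
          rw [hfe]
          rw [show (∏ q ∈ n.primeFactors, q ^ (n * r).factorization q) =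
              ∏ q ∈ n.primeFactors, q ^ n.factorization q from
            Finset.prod_congr rfl fun q hq => by rw [hfacn q hq]]
          exact prod_primeFactors_pow n hn0.ne'
        rw [hprefn] at hcond
        exact absurd hcond (not_le.2 hlt)
    · intro hp
      rw [Sf, Finset.mem_filter]
      refine ⟨by rw [hpfU, Finset.mem_union]; exact Or.inl hp, ?_⟩
      intro q hq hqp
      have hqn : q ∈ n.primeFactors := by
        rw [hpfU, Finset.mem_union] at hq
        rcases hq with hq | hq
        · exact hq
        · exact absurd hqp (not_le.2 (key p hp q hq))
      have hpe : pref (n * r) q = pref n q :=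
        hprefEq q fun q' hq' => not_lt.2 (le_of_lt (key q hqn q' hq'))
      rw [hpe]
      exact hn.2 q (Nat.prime_of_mem_primeFactors hqn) (Nat.dvd_of_mem_primeFactors hqn)
  have hnPart : nPart θ (n * r) = n := by
    rw [nPart, hSf]
    rw [show (∏ p ∈ n.primeFactors, p ^ (n * r).factorization p) =
        ∏ p ∈ n.primeFactors, p ^ n.factorization p from
      Finset.prod_congr rfl fun p hp => by rw [hfacn p hp]]
    exact prod_primeFactors_pow n hn0.ne'
  have hrPart : rPart θ (n * r) = r := by
    have := mul_nPart_rPart θ hm0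
    rw [hnPart] at this
    exact Nat.eq_of_mul_eq_mul_left hn0 this
  exact ⟨hcop, hnPart, hrPart⟩

end FQ

theorem funceq (θ : ℕ → EReal)
    (hθ1 : ((2 : ℝ) : EReal) ≤ θ 1)
    (hθP : ∀ n : ℕ, 2 ≤ n → ∀ p : ℕ, p.Prime → p ∣ n → (((p : ℝ) : EReal)) ≤ θ n)
    (f : ℕ → ℝ) (hf1 : f 1 = 1)
    (hfmul : ∀ m n : ℕ, Nat.Coprime m n → f (m * n) = f m * f n) :
    ∀ x : ℝ, 0 ≤ x →
      ∑ m ∈ Finset.Icc 1 ⌊x⌋₊, f m =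
        ∑ n ∈ (Finset.Icc 1 ⌊x⌋₊).filter (fun n => n ∈ BsetE θ),
          f n * (1 + ∑ r ∈ (Finset.Icc 2 ⌊x / (n : ℝ)⌋₊).filter
              (fun r => θ n < ((r.minFac : ℝ) : EReal)), f r) := by
  intro x hx
  have hstep : ∀ n ∈ (Finset.Icc 1 ⌊x⌋₊).filter (fun n => n ∈ BsetE θ),
      f n * (1 + ∑ r ∈ (Finset.Icc 2 ⌊x / (n : ℝ)⌋₊).filter
          (fun r => θ n < ((r.minFac : ℝ) : EReal)), f r)
        = ∑ r ∈ insert 1 ((Finset.Icc 2 ⌊x / (n : ℝ)⌋₊).filter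
          (fun r => θ n < ((r.minFac : ℝ) : EReal))), f (n * r) := by
    intro n hn
    rw [Finset.mem_filter] at hn
    obtain ⟨hnIcc, hnB⟩ := hn
    have h1 : (1 : ℕ) ∉ (Finset.Icc 2 ⌊x / (n : ℝ)⌋₊).filter
        (fun r => θ n < ((r.minFac : ℝ) : EReal)) := by
      intro h; rw [Finset.mem_filter, Finset.mem_Icc] at h; omega
    have hcg : ∀ r ∈ (Finset.Icc 2 ⌊x / (n : ℝ)⌋₊).filter
        (fun r => θ n < ((r.minFac : ℝ) : EReal)), f (n * r) = f n * f r := by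
      intro r hr
      rw [Finset.mem_filter, Finset.mem_Icc] at hr
      exact hfmul n r (FQ.recon hθP hnB (Or.inr ⟨hr.1.1, hr.2⟩)).1
    rw [Finset.sum_insert h1, mul_one, Finset.sum_congr rfl hcg, ← Finset.mul_sum]
    ring
  rw [Finset.sum_congr rfl hstep, Finset.sum_sigma']
  refine Finset.sum_bij'
    (fun m _ => (⟨FQ.nPart θ m, FQ.rPart θ m⟩ : Σ _ : ℕ, ℕ))
    (fun p _ => p.1 * p.2) ?_ ?_ ?_ ?_ ?_
  · -- hi : image in sigma
    intro m hm
    rw [Finset.mem_Icc] at hm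
    have hm0 : m ≠ 0 := by omega
    have hmul := FQ.mul_nPart_rPart θ hm0
    have hmx : (m : ℝ) ≤ x := (Nat.le_floor_iff hx).1 hm.2
    have hnp : 0 < FQ.nPart θ m := FQ.nPart_pos θ m
    have hrp : 0 < FQ.rPart θ m := FQ.rPart_pos θ m
    rw [Finset.mem_sigma]
    dsimp only
    constructor
    · rw [Finset.mem_filter, Finset.mem_Icc]
      refine ⟨⟨hnp, ?_⟩, FQ.nPart_mem_BsetE θ m⟩
      calc FQ.nPart θ m ≤ m := Nat.le_of_dvd (by omega) ⟨FQ.rPart θ m, hmul.symm⟩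
        _ ≤ ⌊x⌋₊ := hm.2
    · rcases eq_or_ne (FQ.rPart θ m) 1 with h | h
      · rw [h]; exact Finset.mem_insert_self _ _
      · refine Finset.mem_insert_of_mem ?_
        rw [Finset.mem_filter, Finset.mem_Icc]
        refine ⟨⟨by omega, ?_⟩, FQ.rPart_cond h⟩
        rw [Nat.le_floor_iff (div_nonneg hx (by positivity))]
        rw [le_div_iff₀ (by exact_mod_cast hnp)]
        calc ((FQ.rPart θ m : ℝ) * (FQ.nPart θ m : ℝ)) = (m : ℝ) := by
              rw [← Nat.cast_mul, mul_comm, hmul]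
          _ ≤ x := hmx
  · -- hj : n * r lands in Icc 1 ⌊x⌋₊
    rintro ⟨n, r⟩ hp
    dsimp only at hp ⊢
    rw [Finset.mem_sigma] at hp
    dsimp only at hp
    obtain ⟨hnA, hrR⟩ := hp
    rw [Finset.mem_filter, Finset.mem_Icc] at hnA
    obtain ⟨⟨hn1, hnN⟩, hnB⟩ := hnA
    rw [Finset.mem_Icc]
    rcases Finset.mem_insert.1 hrR with h | hrT
    · subst h
      simpa using ⟨hn1, hnN⟩
    · rw [Finset.mem_filter, Finset.mem_Icc] at hrT
      obtain ⟨⟨hr2, hrf⟩, _⟩ := hrT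
      refine ⟨Nat.mul_pos (by omega) (by omega), ?_⟩
      rw [Nat.le_floor_iff hx]
      have hn0R : (0 : ℝ) < (n : ℝ) := Nat.cast_pos.2 (by omega)
      have h1 : (r : ℝ) ≤ x / n := by
        calc (r : ℝ) ≤ (⌊x / (n : ℝ)⌋₊ : ℝ) := Nat.cast_le.2 hrf
          _ ≤ x / n := Nat.floor_le (div_nonneg hx (Nat.cast_nonneg n))
      have h2 : (r : ℝ) * n ≤ x := by
        rw [← le_div_iff₀ hn0R]
        exact h1
      calc ((n * r : ℕ) : ℝ) = (r : ℝ) * n := by push_cast; ring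
        _ ≤ x := h2
  · -- left inverse
    intro m hm
    rw [Finset.mem_Icc] at hm
    exact FQ.mul_nPart_rPart θ (by omega)
  · -- right inverse
    rintro ⟨n, r⟩ hp
    dsimp only at hp ⊢
    rw [Finset.mem_sigma] at hp
    dsimp only at hp
    obtain ⟨hnA, hrR⟩ := hp
    rw [Finset.mem_filter] at hnA
    have hr : r = 1 ∨ (2 ≤ r ∧ θ n < ((r.minFac : ℝ) : EReal)) := by
      rcases Finset.mem_insert.1 hrR with h | hrT
      · exact Or.inl h
      · rw [Finset.mem_filter, Finset.mem_Icc] at hrT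
        exact Or.inr ⟨hrT.1.1, hrT.2⟩
    obtain ⟨_, h1, h2⟩ := FQ.recon hθP hnA.2 hr
    simp only [h1, h2]
  · -- values
    intro m hm
    rw [Finset.mem_Icc] at hm
    rw [FQ.mul_nPart_rPart θ (by omega : m ≠ 0)]
end
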